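/- Let n ≥ 1, s > 0 and z₀ ∈ ℝ \ {0}. For η ∈ ℝ^n define Q_η(ξ) = (|ξ+η|^s − z₀)/(1+|η|²)^{s/2}. Then there exists c > 0 such that for every η ∈ ℝ^n and every ξ ∈ ℝ^n with |ξ| ≤ 1: if ξ + η ≠ 0 then |Q_η(ξ)| + s|ξ+η|^{s−1}/(1+|η|²)^{s/2} ≥ c, and if ξ + η = 0 then |Q_η(ξ)| ≥ c. (Here s|ξ+η|^{s−1}/(1+|η|²)^{s/2} equals |∇Q_η(ξ)| wherever Q_η is differentiable; in particular 0 is not a critical value of Q_η on the closed unit ball, uniformly in η.) -/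

import Mathlib

lemma statement8_aux (s z₀ : ℝ) (hs : 0 < s) (hz₀ : z₀ ≠ 0) :
    ∃ c : ℝ, 0 < c ∧ ∀ r : ℝ, 0 < r →
      c * (r + 2) ^ s ≤ |r ^ s - z₀| + s * r ^ (s - 1) := by
  have h3 : (0:ℝ) < (3:ℝ) ^ s := Real.rpow_pos_of_pos (by norm_num) s
  rcases hz₀.lt_or_gt with hneg | hpos
  · -- z₀ < 0
    refine ⟨min |z₀| 1 / 3 ^ s, by positivity, ?_⟩
    intro r hr
    have hrs : (0:ℝ) ≤ r ^ s := Real.rpow_nonneg hr.le s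
    have habs : |r ^ s - z₀| = r ^ s - z₀ := abs_of_pos (by linarith)
    have hgrad : 0 ≤ s * r ^ (s - 1) := by positivity
    rcases le_total r 1 with h1 | h1
    · have hden : (r + 2) ^ s ≤ 3 ^ s :=
        Real.rpow_le_rpow (by linarith) (by linarith) hs.le
      have : min |z₀| 1 / 3 ^ s * (r + 2) ^ s ≤ min |z₀| 1 := by
        rw [div_mul_eq_mul_div, div_le_iff₀ h3]
        have hm : (0:ℝ) ≤ min |z₀| 1 := le_min (abs_nonneg _) one_pos.le
        nlinarith [Real.rpow_nonneg (by linarith : (0:ℝ) ≤ r + 2) s]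
      have h2 : min |z₀| 1 ≤ |z₀| := min_le_left _ _
      rw [habs, abs_of_neg hneg] at *
      linarith
    · have hden : (r + 2) ^ s ≤ 3 ^ s * r ^ s := by
        rw [← Real.mul_rpow (by norm_num) hr.le]
        exact Real.rpow_le_rpow (by linarith) (by linarith) hs.le
      have : min |z₀| 1 / 3 ^ s * (r + 2) ^ s ≤ min |z₀| 1 * r ^ s := by
        rw [div_mul_eq_mul_div, div_le_iff₀ h3]
        have hm : (0:ℝ) ≤ min |z₀| 1 := le_min (abs_nonneg _) one_pos.le
        nlinarith
      have h2 : min |z₀| 1 * r ^ s ≤ r ^ s := by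
        nlinarith [min_le_right |z₀| (1:ℝ)]
      rw [habs]
      linarith
  · -- z₀ > 0
    set a := (z₀ / 2) ^ s⁻¹ with ha_def
    set b := (2 * z₀) ^ s⁻¹ with hb_def
    have ha : 0 < a := Real.rpow_pos_of_pos (by linarith) _
    have hb : 0 < b := Real.rpow_pos_of_pos (by linarith) _
    have hab : a ≤ b := Real.rpow_le_rpow (by linarith) (by linarith) (by positivity)
    have has : a ^ s = z₀ / 2 := Real.rpow_inv_rpow (by linarith) hs.ne'
    have hbs : b ^ s = 2 * z₀ := Real.rpow_inv_rpow (by linarith) hs.ne'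
    set m := min (a ^ (s - 1)) (b ^ (s - 1)) with hm_def
    have hm : 0 < m := lt_min (Real.rpow_pos_of_pos ha _) (Real.rpow_pos_of_pos hb _)
    have hA : (0:ℝ) < (a + 2) ^ s := Real.rpow_pos_of_pos (by linarith) _
    have hB : (0:ℝ) < (b + 2) ^ s := Real.rpow_pos_of_pos (by linarith) _
    have hD : (0:ℝ) < (1 + 2 / b) ^ s := Real.rpow_pos_of_pos (by positivity) _
    refine ⟨min (min (z₀ / 2 / (a + 2) ^ s) (s * m / (b + 2) ^ s))
      (1 / 2 / (1 + 2 / b) ^ s), by positivity, ?_⟩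
    intro r hr
    have hrs : (0:ℝ) ≤ r ^ s := Real.rpow_nonneg hr.le s
    have hgrad : 0 ≤ s * r ^ (s - 1) := by positivity
    rcases le_total r a with h1 | h1
    · -- r ≤ a
      have hrsa : r ^ s ≤ z₀ / 2 := has ▸ Real.rpow_le_rpow hr.le h1 hs.le
      have habs : z₀ / 2 ≤ |r ^ s - z₀| := by
        rw [abs_of_neg (by linarith)]; linarith
      have hden : (r + 2) ^ s ≤ (a + 2) ^ s :=
        Real.rpow_le_rpow (by linarith) (by linarith) hs.le
      have hc1 : min (min (z₀ / 2 / (a + 2) ^ s) (s * m / (b + 2) ^ s))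
          (1 / 2 / (1 + 2 / b) ^ s) ≤ z₀ / 2 / (a + 2) ^ s :=
        le_trans (min_le_left _ _) (min_le_left _ _)
      have : min (min (z₀ / 2 / (a + 2) ^ s) (s * m / (b + 2) ^ s))
          (1 / 2 / (1 + 2 / b) ^ s) * (r + 2) ^ s ≤ z₀ / 2 := by
        calc _ ≤ z₀ / 2 / (a + 2) ^ s * (a + 2) ^ s := by
              apply mul_le_mul hc1 hden (Real.rpow_nonneg (by linarith) s)
              positivity
          _ = z₀ / 2 := div_mul_cancel₀ _ hA.ne'
      linarith
    rcases le_total r b with h2 | h2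
    · -- a ≤ r ≤ b
      have hrm : m ≤ r ^ (s - 1) := by
        rcases le_total 1 s with hs1 | hs1
        · exact le_trans (min_le_left _ _)
            (Real.rpow_le_rpow ha.le h1 (by linarith))
        · exact le_trans (min_le_right _ _)
            (Real.rpow_le_rpow_of_nonpos (lt_of_lt_of_le ha h1) h2 (by linarith))
      have hden : (r + 2) ^ s ≤ (b + 2) ^ s :=
        Real.rpow_le_rpow (by linarith) (by linarith) hs.le
      have hc2 : min (min (z₀ / 2 / (a + 2) ^ s) (s * m / (b + 2) ^ s))
          (1 / 2 / (1 + 2 / b) ^ s) ≤ s * m / (b + 2) ^ s :=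
        le_trans (min_le_left _ _) (min_le_right _ _)
      have hstep : min (min (z₀ / 2 / (a + 2) ^ s) (s * m / (b + 2) ^ s))
          (1 / 2 / (1 + 2 / b) ^ s) * (r + 2) ^ s ≤ s * m := by
        calc _ ≤ s * m / (b + 2) ^ s * (b + 2) ^ s := by
              apply mul_le_mul hc2 hden (Real.rpow_nonneg (by linarith) s)
              positivity
          _ = s * m := div_mul_cancel₀ _ hB.ne'
      have : s * m ≤ s * r ^ (s - 1) := by nlinarith
      have habs : 0 ≤ |r ^ s - z₀| := abs_nonneg _
      linarith
    · -- b ≤ r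
      have hrsb : 2 * z₀ ≤ r ^ s := hbs ▸ Real.rpow_le_rpow hb.le h2 hs.le
      have habs : r ^ s / 2 ≤ |r ^ s - z₀| := by
        rw [abs_of_pos (by linarith)]; linarith
      have hden : (r + 2) ^ s ≤ (1 + 2 / b) ^ s * r ^ s := by
        rw [← Real.mul_rpow (by positivity) hr.le]
        apply Real.rpow_le_rpow (by linarith) ?_ hs.le
        have : 2 ≤ 2 / b * r := by
          rw [div_mul_eq_mul_div, le_div_iff₀ hb]; nlinarith
        nlinarith [div_nonneg (by norm_num : (0:ℝ) ≤ 2) hb.le]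
      have hc3 : min (min (z₀ / 2 / (a + 2) ^ s) (s * m / (b + 2) ^ s))
          (1 / 2 / (1 + 2 / b) ^ s) ≤ 1 / 2 / (1 + 2 / b) ^ s := min_le_right _ _
      have hstep : min (min (z₀ / 2 / (a + 2) ^ s) (s * m / (b + 2) ^ s))
          (1 / 2 / (1 + 2 / b) ^ s) * (r + 2) ^ s ≤ r ^ s / 2 := by
        calc _ ≤ 1 / 2 / (1 + 2 / b) ^ s * ((1 + 2 / b) ^ s * r ^ s) := by
              apply mul_le_mul hc3 hden (Real.rpow_nonneg (by linarith) s)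
              positivity
          _ = r ^ s / 2 := by field_simp
      linarith

/-- `0` is not a critical value of the rescaled symbols
`Q_η(ξ) = (|ξ+η|^s − z₀)/⟨η⟩^s` on the closed unit ball, uniformly in `η`:
`|Q_η(ξ)| + |∇Q_η(ξ)| ≥ c > 0` (where `|∇Q_η(ξ)| = s|ξ+η|^{s−1}/⟨η⟩^s`). -/
theorem statement8 (n : ℕ) (hn : 1 ≤ n) (s z₀ : ℝ) (hs : 0 < s) (hz₀ : z₀ ≠ 0) :
    ∃ c : ℝ, 0 < c ∧ ∀ (η ξ : EuclideanSpace ℝ (Fin n)), ‖ξ‖ ≤ 1 →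
      (ξ + η ≠ 0 →
        c ≤ |(‖ξ + η‖ ^ s - z₀) / (1 + ‖η‖ ^ 2) ^ (s / 2)| +
              s * ‖ξ + η‖ ^ (s - 1) / (1 + ‖η‖ ^ 2) ^ (s / 2)) ∧
      (ξ + η = 0 →
        c ≤ |(‖ξ + η‖ ^ s - z₀) / (1 + ‖η‖ ^ 2) ^ (s / 2)|) := by
  obtain ⟨c, hc, hC⟩ := statement8_aux s z₀ hs hz₀
  have hz : 0 < |z₀| := abs_pos.mpr hz₀
  have h2s : (0:ℝ) < (2:ℝ) ^ (s / 2) := Real.rpow_pos_of_pos (by norm_num) _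
  refine ⟨min c (|z₀| / 2 ^ (s / 2)), lt_min hc (by positivity), ?_⟩
  intro η ξ hξ
  have ht : (0:ℝ) < (1 + ‖η‖ ^ 2) ^ (s / 2) :=
    Real.rpow_pos_of_pos (by positivity) _
  constructor
  · intro hne
    set r := ‖ξ + η‖ with hr_def
    have hr : 0 < r := norm_pos_iff.mpr hne
    have hηr : ‖η‖ ≤ r + 1 := by
      calc ‖η‖ = ‖(ξ + η) - ξ‖ := by rw [add_sub_cancel_left]
        _ ≤ ‖ξ + η‖ + ‖ξ‖ := norm_sub_le _ _
        _ ≤ r + 1 := by linarith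
    have hden : (1 + ‖η‖ ^ 2) ^ (s / 2) ≤ (r + 2) ^ s := by
      have h1 : 1 + ‖η‖ ^ 2 ≤ (r + 2) ^ 2 := by
        nlinarith [norm_nonneg η, norm_nonneg (ξ + η)]
      calc (1 + ‖η‖ ^ 2) ^ (s / 2) ≤ ((r + 2) ^ 2) ^ (s / 2) :=
            Real.rpow_le_rpow (by positivity) h1 (by positivity)
        _ = (r + 2) ^ s := by
            rw [← Real.rpow_natCast (r + 2) 2, ← Real.rpow_mul (by linarith)]
            congr 1; push_cast; ring
    have hkey := hC r hr
    rw [abs_div, abs_of_pos ht, ← add_div, le_div_iff₀ ht]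
    calc min c (|z₀| / 2 ^ (s / 2)) * (1 + ‖η‖ ^ 2) ^ (s / 2)
        ≤ c * (r + 2) ^ s := by
          apply mul_le_mul (min_le_left _ _) hden ht.le hc.le
      _ ≤ |r ^ s - z₀| + s * r ^ (s - 1) := hkey
  · intro heq
    have hη : η = -ξ := by
      have := heq
      rw [add_eq_zero_iff_eq_neg] at this
      rw [this]; simp
    rw [heq]
    have h0 : ‖(0 : EuclideanSpace ℝ (Fin n))‖ = 0 := norm_zero
    rw [h0, Real.zero_rpow hs.ne', zero_sub, abs_div, abs_neg, abs_of_pos ht]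
    have hden : (1 + ‖η‖ ^ 2) ^ (s / 2) ≤ 2 ^ (s / 2) := by
      apply Real.rpow_le_rpow (by positivity) ?_ (by positivity)
      have : ‖η‖ ≤ 1 := by rw [hη, norm_neg]; exact hξ
      nlinarith [norm_nonneg η]
    calc min c (|z₀| / 2 ^ (s / 2)) ≤ |z₀| / 2 ^ (s / 2) := min_le_right _ _
      _ ≤ |z₀| / (1 + ‖η‖ ^ 2) ^ (s / 2) :=
          div_le_div_of_nonneg_left (abs_nonneg _) ht hden
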